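/- In a discrete structural equation model, each variable is conditionally independent of its non-descendants given its parents: for every node i, every a ∈ A, and every tuple w of values indexed by N_i := {j ∈ [d] : j ≠ i and j is not a descendant of i}, writing p for the restriction of w to Pa_i (note Pa_i ⊆ N_i by acyclicity), P({V_i = a} ∩ {(V_j)_{j∈N_i} = w}) · P({(V_j)_{j∈Pa_i} = p}) = P({V_i = a} ∩ {(V_j)_{j∈Pa_i} = p}) · P({(V_j)_{j∈N_i} = w}). -/

import Mathlib

open MeasureTheory

/-- By acyclicity, every parent `j` of `i` is a non-descendant of `i`
(and distinct from `i`). -/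
theorem parent_mem_nondesc {d : ℕ} {E : Fin d → Fin d → Prop}
    (hacyc : ∀ i, ¬ Relation.TransGen E i i) (i : Fin d)
    (j : {j : Fin d // E j i}) :
    j.1 ≠ i ∧ ¬ Relation.TransGen E i j.1 := by
  constructor
  · intro h
    have hji := j.2
    rw [h] at hji
    exact hacyc i (Relation.TransGen.single hji)
  · intro h
    exact hacyc i (h.tail j.2)

/-- In a discrete structural equation model, each variable is conditionally
independent of its non-descendants given its parents, stated via the product
formula for the corresponding events. -/
theorem stmt4 {d : ℕ} (E : Fin d → Fin d → Prop)
    (hacyc : ∀ i, ¬ Relation.TransGen E i i)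
    {Ω A : Type*} [MeasurableSpace Ω] (P : Measure Ω) [IsProbabilityMeasure P]
    [Fintype A] [AddCommGroup A] [MeasurableSpace A] [MeasurableSingletonClass A]
    (ε : Fin d → Ω → A) (hεmeas : ∀ i, Measurable (ε i))
    (hindep : ProbabilityTheory.iIndepFun ε P)
    (f : (i : Fin d) → ({j : Fin d // E j i} → A) → A)
    (V : Fin d → Ω → A) (hVmeas : ∀ i, Measurable (V i))
    (hV : ∀ i ω, V i ω = f i (fun j => V j.1 ω) + ε i ω)
    (i : Fin d) (a : A)
    (w : {j : Fin d // j ≠ i ∧ ¬ Relation.TransGen E i j} → A) :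
    P ({ω | V i ω = a}
        ∩ {ω | ∀ j : {j : Fin d // j ≠ i ∧ ¬ Relation.TransGen E i j}, V j.1 ω = w j})
      * P {ω | ∀ j : {j : Fin d // E j i}, V j.1 ω = w ⟨j.1, parent_mem_nondesc hacyc i j⟩}
    = P ({ω | V i ω = a}
        ∩ {ω | ∀ j : {j : Fin d // E j i}, V j.1 ω = w ⟨j.1, parent_mem_nondesc hacyc i j⟩})
      * P {ω | ∀ j : {j : Fin d // j ≠ i ∧ ¬ Relation.TransGen E i j}, V j.1 ω = w j} := by
  classical
  -- notation
  set p : {j : Fin d // E j i} → A := fun j => w ⟨j.1, parent_mem_nondesc hacyc i j⟩ with hp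
  set c : A := a - f i p with hc
  set W : Ω → ({j : Fin d // j ≠ i ∧ ¬ Relation.TransGen E i j} → A) := fun ω j => V j.1 ω
    with hW
  set Wp : Ω → ({j : Fin d // E j i} → A) := fun ω j => V j.1 ω with hWp
  set U : Ω → ({j : Fin d // j ≠ i ∧ ¬ Relation.TransGen E i j} → A) := fun ω j => ε j.1 ω
    with hU
  -- event rewrites
  have hNev : {ω | ∀ j : {j : Fin d // j ≠ i ∧ ¬ Relation.TransGen E i j}, V j.1 ω = w j}
      = W ⁻¹' {w} := by
    ext ω; simp [hW, Set.mem_preimage, funext_iff]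
  have hPev : {ω | ∀ j : {j : Fin d // E j i},
        V j.1 ω = w ⟨j.1, parent_mem_nondesc hacyc i j⟩}
      = Wp ⁻¹' {p} := by
    ext ω; simp [hWp, hp, Set.mem_preimage, funext_iff]
  have key : ∀ ω, (∀ j : {j : Fin d // E j i}, V j.1 ω = p j) → (V i ω = a ↔ ε i ω = c) := by
    intro ω h
    have hf : f i (fun j => V j.1 ω) = f i p := by
      congr 1; funext j; exact h j
    rw [hV i ω, hf, hc]
    exact eq_sub_iff_add_eq'.symm
  have hA : {ω | V i ω = a}
      ∩ {ω | ∀ j : {j : Fin d // j ≠ i ∧ ¬ Relation.TransGen E i j}, V j.1 ω = w j}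
      = (ε i ⁻¹' {c}) ∩ (W ⁻¹' {w}) := by
    rw [← hNev]; ext ω
    simp only [Set.mem_inter_iff, Set.mem_setOf_eq, Set.mem_preimage, Set.mem_singleton_iff]
    constructor
    · rintro ⟨h1, h2⟩
      exact ⟨(key ω (fun j => h2 ⟨j.1, parent_mem_nondesc hacyc i j⟩)).mp h1, h2⟩
    · rintro ⟨h1, h2⟩
      exact ⟨(key ω (fun j => h2 ⟨j.1, parent_mem_nondesc hacyc i j⟩)).mpr h1, h2⟩
  have hB : {ω | V i ω = a}
      ∩ {ω | ∀ j : {j : Fin d // E j i}, V j.1 ω = w ⟨j.1, parent_mem_nondesc hacyc i j⟩}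
      = (ε i ⁻¹' {c}) ∩ (Wp ⁻¹' {p}) := by
    rw [← hPev]; ext ω
    simp only [Set.mem_inter_iff, Set.mem_setOf_eq, Set.mem_preimage, Set.mem_singleton_iff]
    constructor
    · rintro ⟨h1, h2⟩; exact ⟨(key ω fun j => (h2 j).trans rfl).mp h1, h2⟩
    · rintro ⟨h1, h2⟩; exact ⟨(key ω fun j => (h2 j).trans rfl).mpr h1, h2⟩
  -- well-foundedness
  haveI : IsTrans (Fin d) (Relation.TransGen E) := inferInstance
  haveI : IsIrrefl (Fin d) (Relation.TransGen E) := ⟨hacyc⟩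
  have hwfT : WellFounded (Relation.TransGen E) :=
    Finite.wellFounded_of_trans_of_irrefl _
  have hwfE : WellFounded E :=
    Subrelation.wf (fun h => Relation.TransGen.single h) hwfT
  -- measurability of add on A
  haveI : MeasurableAdd₂ A := ⟨measurable_of_countable _⟩
  -- the comap σ-algebra generated by the nondescendant noises
  set mS : MeasurableSpace Ω := MeasurableSpace.comap U inferInstance with hmS
  have hUmS : Measurable[mS] U := fun s hs => ⟨s, hs, rfl⟩
  have hMeasV : ∀ j : Fin d, j ≠ i → ¬ Relation.TransGen E i j → Measurable[mS] (V j) := by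
    intro j
    induction j using hwfE.induction with
    | _ j IH =>
      intro hj1 hj2
      have hεj : Measurable[mS] (ε j) := by
        have : ε j = (fun v : {k : Fin d // k ≠ i ∧ ¬ Relation.TransGen E i k} → A => v ⟨j, hj1, hj2⟩) ∘ U := rfl
        rw [this]
        exact (measurable_pi_apply _).comp hUmS
      have hT : Measurable[mS] (fun ω => fun k : {k : Fin d // E k j} => V k.1 ω) := by
        apply measurable_pi_iff.mpr
        intro k
        have hk1 : k.1 ≠ i := by
          intro h; exact hj2 (h ▸ Relation.TransGen.single k.2)
        have hk2 : ¬ Relation.TransGen E i k.1 := fun h => hj2 (h.tail k.2)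
        exact IH k.1 k.2 hk1 hk2
      have : V j = fun ω => f j (fun k : {k : Fin d // E k j} => V k.1 ω) + ε j ω := by
        funext ω; exact hV j ω
      rw [this]
      exact ((measurable_of_countable (f j)).comp hT).add hεj
  have hWmS : Measurable[mS] W := by
    apply measurable_pi_iff.mpr
    intro j; exact hMeasV j.1 j.2.1 j.2.2
  have hWpmS : Measurable[mS] Wp := by
    apply measurable_pi_iff.mpr
    intro j; exact hMeasV j.1 (parent_mem_nondesc hacyc i j).1 (parent_mem_nondesc hacyc i j).2
  -- independence of ε i and U
  set T : Finset (Fin d) := Finset.univ.filter (fun j => j ≠ i ∧ ¬ Relation.TransGen E i j)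
    with hT
  have hiT : i ∉ T := by simp [hT]
  have hdisj : Disjoint ({i} : Finset (Fin d)) T := by
    simp [Finset.disjoint_left, hiT]
  have h0 := hindep.indepFun_finset {i} T hdisj hεmeas
  have hIndepU : ProbabilityTheory.IndepFun (ε i) U P := by
    have := h0.comp (φ := fun v : ({x // x ∈ ({i} : Finset (Fin d))} → A) => v ⟨i, by simp⟩)
      (ψ := fun v : ({x // x ∈ T} → A) =>
        fun j : {j : Fin d // j ≠ i ∧ ¬ Relation.TransGen E i j} =>
          v ⟨j.1, by simp [hT, j.2.1, j.2.2]⟩)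
      (measurable_pi_apply _ :
        Measurable fun v : ({x // x ∈ ({i} : Finset (Fin d))} → A) => v ⟨i, by simp⟩)
      (measurable_pi_iff.mpr fun j => measurable_pi_apply _)
    exact this
  have hIndepW : ProbabilityTheory.IndepFun (ε i) W P :=
    ProbabilityTheory.indep_of_indep_of_le_right hIndepU (measurable_iff_comap_le.mp hWmS)
  have hIndepWp : ProbabilityTheory.IndepFun (ε i) Wp P :=
    ProbabilityTheory.indep_of_indep_of_le_right hIndepU (measurable_iff_comap_le.mp hWpmS)
  -- conclude
  have e1 := hIndepW.measure_inter_preimage_eq_mul {c} {w}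
    (measurableSet_singleton c) (measurableSet_singleton w)
  have e2 := hIndepWp.measure_inter_preimage_eq_mul {c} {p}
    (measurableSet_singleton c) (measurableSet_singleton p)
  rw [hA, hB, hPev, hNev, e1, e2]
  ring
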